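/- The only vertex of the graph G' at distance at least 3 from the vertex S_n' is v; every other vertex of G' is at distance at most 2 from S_n'. -/

import Mathlib

/-- Raw vertex names for the graph `G'`: `G(Q,S)` with `q*` and `u₂` deleted and a new
vertex `x` added (adjacent to `v` and `w`). -/
inductive HVertex' (m n : ℕ) : Type
  | elt : Fin m → HVertex' m n
  | hyp : Fin n → HVertex' m n
  | copy : Fin n → HVertex' m n
  | sub : Fin m → Fin n → HVertex' m n
  | u1 : HVertex' m n
  | x : HVertex' m n
  | v : HVertex' m n
  | w : HVertex' m n

/-- A raw vertex name is an actual vertex of `G'`: the subdivision vertex `q^i_j`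
exists only when `q_i ∈ S_j`. -/
def HVertex'.OK {m n : ℕ} (S : Fin n → Set (Fin m)) : HVertex' m n → Prop
  | .sub i j => i ∈ S j
  | _ => True

/-- The vertex set of `G'`. -/
def GVertex' {m n : ℕ} (S : Fin n → Set (Fin m)) : Type := {y : HVertex' m n // y.OK S}

/-- The (asymmetrically listed) edges of `G'`:
`q^i_j q_i`, `q^i_j S_j`, `q_i S_j'` (for `q_i ∈ S_j`), `S_j S_k'` (all `j,k`),
`u₁ S_j`, `u₁ v`, `x v`, `x w`, `w S_j'`. -/
def baseAdj' {m n : ℕ} (S : Fin n → Set (Fin m)) : HVertex' m n → HVertex' m n → Prop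
  | .sub i _, .elt i' => i = i'
  | .sub _ j, .hyp j' => j = j'
  | .elt i, .copy j => i ∈ S j
  | .hyp _, .copy _ => True
  | .u1, .hyp _ => True
  | .u1, .v => True
  | .x, .v => True
  | .x, .w => True
  | .w, .copy _ => True
  | _, _ => False

/-- The graph `G'`. -/
def GQS' {m n : ℕ} (S : Fin n → Set (Fin m)) : SimpleGraph (GVertex' S) :=
  SimpleGraph.fromRel (fun a b => baseAdj' S a.1 b.1)

lemma adj_iff' {m n : ℕ} (S : Fin n → Set (Fin m)) (a b : GVertex' S) :
    (GQS' S).Adj a b ↔ a ≠ b ∧ (baseAdj' S a.1 b.1 ∨ baseAdj' S b.1 a.1) :=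
  SimpleGraph.fromRel_adj _ a b

lemma dist_le_one' {V : Type*} {G : SimpleGraph V} {a b : V} (h : G.Adj a b) :
    G.dist a b ≤ 1 := by
  simpa using SimpleGraph.dist_le (SimpleGraph.Walk.cons h .nil)

lemma short_walk {V : Type*} {G : SimpleGraph V} {a b : V} (p : G.Walk a b)
    (h : p.length ≤ 2) : a = b ∨ G.Adj a b ∨ ∃ z, G.Adj a z ∧ G.Adj z b := by
  cases p with
  | nil => exact Or.inl rfl
  | cons h1 q =>
    cases q with
    | nil => exact Or.inr (Or.inl h1)
    | cons h2 q2 =>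
      cases q2 with
      | nil => exact Or.inr (Or.inr ⟨_, h1, h2⟩)
      | cons h3 q3 => simp at h

lemma dist_le_two' {V : Type*} {G : SimpleGraph V} {a b c : V} (h1 : G.Adj a b)
    (h2 : G.Adj b c) : G.dist a c ≤ 2 := by
  simpa using SimpleGraph.dist_le (SimpleGraph.Walk.cons h1 (SimpleGraph.Walk.cons h2 .nil))

theorem stmt_17 {m n : ℕ} (S : Fin n → Set (Fin m)) (hn : 2 ≤ n)
    (hSne : ∀ j, (S j).Nonempty) (hSlast : S ⟨n - 1, by omega⟩ = Set.univ) :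
    3 ≤ (GQS' S).dist ⟨.copy ⟨n - 1, by omega⟩, trivial⟩ ⟨.v, trivial⟩ ∧
    ∀ y : GVertex' S, y.1 ≠ HVertex'.v →
      (GQS' S).dist ⟨.copy ⟨n - 1, by omega⟩, trivial⟩ y ≤ 2 := by
  set N : Fin n := ⟨n - 1, by omega⟩ with hN
  set c : GVertex' S := ⟨.copy N, trivial⟩ with hc
  have h0 : (0 : ℕ) < n := by omega
  -- useful adjacencies
  have hadjhyp : ∀ j : Fin n, (GQS' S).Adj c ⟨.hyp j, trivial⟩ := by
    intro j
    refine (adj_iff' S _ _).mpr ?_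
    exact ⟨(fun heq => by have h := congrArg (Subtype.val : GVertex' S → HVertex' m n) heq; simp [hc] at h), Or.inr trivial⟩
  have hadjelt : ∀ i : Fin m, (GQS' S).Adj c ⟨.elt i, trivial⟩ := by
    intro i
    refine (adj_iff' S _ _).mpr ?_
    refine ⟨(fun heq => by have h := congrArg (Subtype.val : GVertex' S → HVertex' m n) heq; simp [hc] at h), Or.inr ?_⟩
    show i ∈ S N
    rw [hSlast]; trivial
  have hadjw : (GQS' S).Adj c ⟨.w, trivial⟩ := by
    refine (adj_iff' S _ _).mpr ?_
    exact ⟨(fun heq => by have h := congrArg (Subtype.val : GVertex' S → HVertex' m n) heq; simp [hc] at h), Or.inr trivial⟩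
  constructor
  · -- distance ≥ 3
    by_contra hlt
    push_neg at hlt
    have ha1 : (GQS' S).Adj ⟨.hyp ⟨0, h0⟩, trivial⟩ ⟨.u1, trivial⟩ := by
      refine (adj_iff' S _ _).mpr ?_
      exact ⟨(fun heq => by have h := congrArg (Subtype.val : GVertex' S → HVertex' m n) heq; simp [hc] at h), Or.inr trivial⟩
    have ha2 : (GQS' S).Adj ⟨.u1, trivial⟩ ⟨.v, trivial⟩ := by
      refine (adj_iff' S _ _).mpr ?_
      exact ⟨(fun heq => by have h := congrArg (Subtype.val : GVertex' S → HVertex' m n) heq; simp [hc] at h), Or.inl trivial⟩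
    have hr : (GQS' S).Reachable c ⟨.v, trivial⟩ :=
      ⟨.cons (hadjhyp ⟨0, h0⟩) (.cons ha1 (.cons ha2 .nil))⟩
    obtain ⟨p, hp⟩ := hr.exists_walk_length_eq_dist
    have hlen : p.length ≤ 2 := by omega
    rcases short_walk p hlen with heq | h1 | ⟨z, h1, h2⟩
    · have h := congrArg (Subtype.val : GVertex' S → HVertex' m n) heq; simp [hc] at h
    · replace h1 := (adj_iff' S _ _).mp h1
      obtain ⟨-, h1⟩ := h1
      simp [baseAdj', hc] at h1
    · obtain ⟨zv, hz⟩ := z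
      replace h1 := (adj_iff' S _ _).mp h1; replace h2 := (adj_iff' S _ _).mp h2
      obtain ⟨-, h1⟩ := h1
      obtain ⟨-, h2⟩ := h2
      cases zv <;> simp [baseAdj', hc] at h1 h2
  · rintro ⟨yv, hy⟩ hyne
    cases yv with
    | elt i => exact le_trans (dist_le_one' (hadjelt i)) (by norm_num)
    | hyp j => exact le_trans (dist_le_one' (hadjhyp j)) (by norm_num)
    | copy k =>
      refine dist_le_two' (hadjhyp ⟨0, h0⟩) ?_
      refine (adj_iff' S _ _).mpr ?_
      exact ⟨(fun heq => by have h := congrArg (Subtype.val : GVertex' S → HVertex' m n) heq; simp [hc] at h), Or.inl trivial⟩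
    | sub i j =>
      refine dist_le_two' (hadjelt i) ?_
      refine (adj_iff' S _ _).mpr ?_
      refine ⟨(fun heq => by have h := congrArg (Subtype.val : GVertex' S → HVertex' m n) heq; simp [hc] at h), Or.inr ?_⟩
      show (i : Fin m) = i
      rfl
    | u1 =>
      refine dist_le_two' (hadjhyp ⟨0, h0⟩) ?_
      refine (adj_iff' S _ _).mpr ?_
      exact ⟨(fun heq => by have h := congrArg (Subtype.val : GVertex' S → HVertex' m n) heq; simp [hc] at h), Or.inr trivial⟩
    | x =>
      refine dist_le_two' hadjw ?_
      refine (adj_iff' S _ _).mpr ?_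
      exact ⟨(fun heq => by have h := congrArg (Subtype.val : GVertex' S → HVertex' m n) heq; simp [hc] at h), Or.inr trivial⟩
    | v => exact absurd rfl hyne
    | w => exact le_trans (dist_le_one' hadjw) (by norm_num)
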